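/- For positive real numbers a, b, c, d, the trace of the matrix product L(a)·R(b)·R(c)·L(d) equals √(abcd) + √(acd/b) + √(ad/(bc)) + √(cd/(ab)) + √(d/(abc)) + 1/√(abcd). (Equation (6.8): the trace of the monodromy ρ(g₅) = L(X₁,₄)R(X₂,₁)R(X₁,₂)L(X₂,₂) equals the formal geodesic function 𝔸₂,₄ of the 𝒜₄-groupoid, with a = X₁,₄, b = X₂,₁, c = X₁,₂, d = X₂,₂.) -/

import Mathlib

/-- The left-turn transport matrix `L(t)`. -/
noncomputable def Lmat (t : ℝ) : Matrix (Fin 2) (Fin 2) ℝ :=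
  !![Real.sqrt t, Real.sqrt t; 0, (Real.sqrt t)⁻¹]

/-- The right-turn transport matrix `R(t)`. -/
noncomputable def Rmat (t : ℝ) : Matrix (Fin 2) (Fin 2) ℝ :=
  !![Real.sqrt t, 0; (Real.sqrt t)⁻¹, (Real.sqrt t)⁻¹]

/-- Equation (6.8): the trace of the monodromy `ρ(g₅) = L(a)R(b)R(c)L(d)` equals
the formal geodesic function `𝔸₂,₄`. -/
theorem stmt_8 (a b c d : ℝ) (ha : 0 < a) (hb : 0 < b) (hc : 0 < c) (hd : 0 < d) :
    (Lmat a * Rmat b * Rmat c * Lmat d).trace =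
      Real.sqrt (a * b * c * d) + Real.sqrt (a * c * d / b) + Real.sqrt (a * d / (b * c))
        + Real.sqrt (c * d / (a * b)) + Real.sqrt (d / (a * b * c))
        + 1 / Real.sqrt (a * b * c * d) := by
  have sa := Real.sqrt_pos.mpr ha
  have sb := Real.sqrt_pos.mpr hb
  have sc := Real.sqrt_pos.mpr hc
  have sd := Real.sqrt_pos.mpr hd
  rw [show a * b * c * d = a * (b * (c * d)) by ring,
    show a * c * d / b = a * (c * (d / b)) by ring,
    show a * d / (b * c) = a * (d / (b * c)) by ring,
    show c * d / (a * b) = c * (d / (a * b)) by ring]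
  simp only [Real.sqrt_mul ha.le, Real.sqrt_mul hb.le, Real.sqrt_mul hc.le,
    Real.sqrt_div hd.le, Real.sqrt_div hc.le, Real.sqrt_div ha.le,
    Real.sqrt_mul (mul_nonneg ha.le hb.le), Real.sqrt_mul (mul_nonneg hb.le hc.le)]
  simp only [Lmat, Rmat, Matrix.trace_fin_two, Matrix.mul_apply, Fin.sum_univ_two,
    Matrix.cons_val', Matrix.cons_val_zero, Matrix.cons_val_one, Matrix.head_cons,
    Matrix.empty_val', Matrix.cons_val_fin_one, Matrix.head_fin_const, Matrix.of_apply]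
  field_simp
  ring
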